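/- arXiv:0806.0176 — 2 statements merged into one kernel-verified Lean document; each statement's English description precedes it below -/
import Mathlib

section
/- In the ring C, for finite subsets I, J of ℤ, the ideal intersection satisfies Cx_I ∩ Cx_J = Cx_{I∪J}. -/
open scoped symmDiff

noncomputable section

/-- The ring `C = k[x_n : n ∈ ℤ] / (x_n² + n = x_m² + m)`. -/
abbrev WeylC (k : Type) [Field k] : Type :=
  MvPolynomial ℤ k ⧸ Ideal.span { p : MvPolynomial ℤ k |
    ∃ m n : ℤ, p = MvPolynomial.X n ^ 2 + (n : MvPolynomial ℤ k)
      - MvPolynomial.X m ^ 2 - (m : MvPolynomial ℤ k) }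

variable (k : Type) [Field k]

/-- The generator `x_n` of `C`. -/
def xC (n : ℤ) : WeylC k := Ideal.Quotient.mk _ (MvPolynomial.X n)

/-- `x_I := ∏_{i ∈ I} x_i` for a finite subset `I ⊆ ℤ` (with `x_∅ = 1`). -/
def xS (I : Finset ℤ) : WeylC k := ∏ i ∈ I, xC k i

/-- The identity component `C_∅ = k[x_0²]`. -/
def Cphi : Subalgebra k (WeylC k) := Algebra.adjoin k {xC k 0 ^ 2}

/-- The homogeneous component `C_I = C_∅ · x_I` of the `ℤ_fin`-grading on `C`. -/
def Cgrade (I : Finset ℤ) : Submodule k (WeylC k) :=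
  (Cphi k).toSubmodule.map (LinearMap.mulRight k (xS k I))

/-- The defining relation in `C`: `x_i² = x_j² + (j - i)`. -/
lemma xC_sq (i j : ℤ) : xC k i ^ 2 = xC k j ^ 2 + ((j - i : ℤ) : WeylC k) := by
  have hmem : (MvPolynomial.X i ^ 2 + (i : MvPolynomial ℤ k)
      - MvPolynomial.X j ^ 2 - (j : MvPolynomial ℤ k)) ∈
      Ideal.span { p : MvPolynomial ℤ k |
        ∃ m n : ℤ, p = MvPolynomial.X n ^ 2 + (n : MvPolynomial ℤ k)
          - MvPolynomial.X m ^ 2 - (m : MvPolynomial ℤ k) } :=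
    Ideal.subset_span ⟨j, i, rfl⟩
  have h0 := (Ideal.Quotient.eq_zero_iff_mem).2 hmem
  have h1 : xC k i ^ 2 + (i : WeylC k) - xC k j ^ 2 - (j : WeylC k) = 0 := by
    rw [← h0]
    simp [xC]
  push_cast
  linear_combination h1

/-- `x_K² ≡ ∏_{i∈K} (j - i)  (mod x_j)`. -/
lemma xC_dvd_sq_sub (j : ℤ) (K : Finset ℤ) :
    xC k j ∣ (xS k K) ^ 2 - ((∏ i ∈ K, (j - i) : ℤ) : WeylC k) := by
  classical
  induction K using Finset.induction_on with
  | empty => simp [xS]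
  | @insert a K ha ih =>
      rw [xS, Finset.prod_insert ha, Finset.prod_insert ha, ← xS, Int.cast_mul]
      have key : xC k a ^ 2 = xC k j ^ 2 + ((j - a : ℤ) : WeylC k) := xC_sq k a j
      have : (xC k a * xS k K) ^ 2 - ((j - a : ℤ) : WeylC k) * ((∏ i ∈ K, (j - i) : ℤ) : WeylC k)
          = xC k j * (xC k j * xS k K ^ 2)
            + ((j - a : ℤ) : WeylC k) * ((xS k K) ^ 2 - ((∏ i ∈ K, (j - i) : ℤ) : WeylC k)) := by
        ring_nf
        linear_combination (xS k K ^ 2) * key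
      rw [this]
      exact dvd_add (Dvd.intro _ rfl) (Dvd.dvd.mul_left ih _)

/-- Cancellation: if `j ∉ K` and `x_j ∣ a x_K`, then `x_j ∣ a`. -/
lemma xC_dvd_of_dvd_mul [CharZero k] (j : ℤ) (K : Finset ℤ) (hj : j ∉ K)
    (a : WeylC k) (h : xC k j ∣ a * xS k K) : xC k j ∣ a := by
  classical
  set m : ℤ := ∏ i ∈ K, (j - i) with hm
  have hm0 : m ≠ 0 := by
    rw [hm]
    exact Finset.prod_ne_zero_iff.2 fun i hi => sub_ne_zero.2 fun he => hj (he ▸ hi)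
  have h2 : xC k j ∣ a * (xS k K) ^ 2 := by
    obtain ⟨b, hb⟩ := h
    exact ⟨b * xS k K, by rw [sq, ← mul_assoc, hb]; ring⟩
  have h3 : xC k j ∣ a * (m : WeylC k) := by
    have : a * (m : WeylC k) = a * (xS k K) ^ 2 - a * ((xS k K) ^ 2 - (m : WeylC k)) := by ring
    rw [this]
    exact dvd_sub h2 ((xC_dvd_sq_sub k j K).mul_left a)
  have hmk : (m : k) ≠ 0 := Int.cast_ne_zero.2 hm0
  have hcast : ((m : ℤ) : WeylC k) = algebraMap k (WeylC k) ((m : ℤ) : k) := by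
    rw [map_intCast]
  have ha : a = a * (m : WeylC k) * algebraMap k (WeylC k) ((m : k)⁻¹) := by
    rw [hcast, mul_assoc, ← map_mul, mul_inv_cancel₀ hmk, map_one, mul_one]
  rw [ha]
  exact h3.mul_right _

lemma xS_union_dvd [CharZero k] (I J : Finset ℤ) (c : WeylC k)
    (hI : xS k I ∣ c) (hJ : xS k J ∣ c) : xS k (I ∪ J) ∣ c := by
  classical
  induction J using Finset.induction_on with
  | empty => simpa using hI
  | @insert j J hjJ ih =>
      have hins : xS k (insert j J) = xC k j * xS k J := by
        rw [xS, Finset.prod_insert hjJ, ← xS]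
      have hJc : xS k J ∣ c := (Dvd.intro_left _ hins.symm).trans hJ
      have hjc : xC k j ∣ c := (Dvd.intro _ hins.symm).trans hJ
      have hIJ : xS k (I ∪ J) ∣ c := ih hJc
      by_cases hj : j ∈ I ∪ J
      · rwa [Finset.union_insert, Finset.insert_eq_self.2 hj]
      · obtain ⟨a, ha⟩ := hIJ
        have hja : xC k j ∣ a := by
          apply xC_dvd_of_dvd_mul k j (I ∪ J) hj
          rwa [mul_comm, ← ha]
        obtain ⟨b, hb⟩ := hja
        refine ⟨b, ?_⟩
        rw [Finset.union_insert, xS, Finset.prod_insert hj, ← xS, ha, hb]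
        ring

variable [CharZero k]

/-- In `C`, the intersection of the principal (graded) ideals
satisfies `Cx_I ∩ Cx_J = Cx_{I∪J}`. -/
theorem ideal_inf_eq (I J : Finset ℤ) :
    Ideal.span {xS k I} ⊓ Ideal.span {xS k J} = Ideal.span {xS k (I ∪ J)} := by
  classical
  apply le_antisymm
  · intro c hc
    rw [Ideal.mem_inf, Ideal.mem_span_singleton, Ideal.mem_span_singleton] at hc
    rw [Ideal.mem_span_singleton]
    exact xS_union_dvd k I J c hc.1 hc.2
  · apply le_inf
    · rw [Ideal.span_singleton_le_span_singleton]
      exact Finset.prod_dvd_prod_of_subset _ _ _ Finset.subset_union_left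
    · rw [Ideal.span_singleton_le_span_singleton]
      exact Finset.prod_dvd_prod_of_subset _ _ _ Finset.subset_union_right
end
end

section
/- There is a well-defined almost-automorphism φ of the ℤ_fin-graded ring C determined by φ(a x_J) = φ(a) x_{−J} for a ∈ k[z] (where z = x_0² and φ(z) = −z): for homogeneous c ∈ C_I and d ∈ C_J one has φ(cd) = (−1)^{|I∩J|} φ(c) φ(d), and moreover φ(x_n²) = −x_{−n}² for all n and φ² = id_C. -/
open scoped symmDiff

noncomputable section

variable (k : Type) [Field k]

/-- Negation of a finite set of integers. -/
def negSet (J : Finset ℤ) : Finset ℤ := J.image (fun j => -j)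

namespace WeylAux

open MvPolynomial Finsupp

/-- Negate the domain of an exponent vector. -/
def negE (e : ℤ →₀ ℕ) : ℤ →₀ ℕ := Finsupp.equivMapDomain (Equiv.neg ℤ) e

lemma negE_add (e f : ℤ →₀ ℕ) : negE (e + f) = negE e + negE f := by
  simp [negE, Finsupp.equivMapDomain_eq_mapDomain, Finsupp.mapDomain_add]

lemma negE_single (a : ℤ) (b : ℕ) : negE (Finsupp.single a b) = Finsupp.single (-a) b := by
  rw [negE, Finsupp.equivMapDomain_single, Equiv.neg_apply]

lemma negE_zero : negE 0 = 0 := Finsupp.equivMapDomain_zero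

lemma negE_negE (e : ℤ →₀ ℕ) : negE (negE e) = e := by
  ext n; simp [negE, Finsupp.equivMapDomain_apply]

/-- Sum of the floors of half the exponents. -/
def sdeg (e : ℤ →₀ ℕ) : ℕ := e.sum fun _ a => a / 2

lemma sdeg_negE (e : ℤ →₀ ℕ) : sdeg (negE e) = sdeg e := by
  simp [sdeg, negE, Finsupp.sum_equivMapDomain]

lemma sdeg_eq_sum {e : ℤ →₀ ℕ} {U : Finset ℤ} (h : e.support ⊆ U) :
    sdeg e = ∑ n ∈ U, e n / 2 :=
  Finsupp.sum_of_support_subset e h _ (by simp)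

lemma sdeg_add_even (e f : ℤ →₀ ℕ) (hf : ∀ n, 2 ∣ f n) :
    sdeg (e + f) = sdeg e + sdeg f := by
  have h1 : (e + f).support ⊆ e.support ∪ f.support := Finsupp.support_add
  rw [sdeg_eq_sum h1, sdeg_eq_sum (Finset.subset_union_left (s₂ := f.support)),
    sdeg_eq_sum (Finset.subset_union_right (s₁ := e.support)), ← Finset.sum_add_distrib]
  refine Finset.sum_congr rfl fun n _ => ?_
  obtain ⟨c, hc⟩ := hf n
  simp only [Finsupp.add_apply, hc]
  omega

lemma sdeg_single (a : ℤ) (b : ℕ) : sdeg (Finsupp.single a b) = b / 2 :=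
  Finsupp.sum_single_index (by simp)

lemma sdeg_zero : sdeg 0 = 0 := Finsupp.sum_zero_index

/-- The exponent vector of `x_I = ∏_{i∈I} x_i`. -/
def expS (I : Finset ℤ) : ℤ →₀ ℕ := ∑ i ∈ I, Finsupp.single i 1

lemma expS_apply (I : Finset ℤ) (n : ℤ) : expS I n = if n ∈ I then 1 else 0 := by
  classical
  rw [expS, Finset.sum_apply']
  simp [Finsupp.single_apply]

lemma support_expS (I : Finset ℤ) : (expS I).support ⊆ I := by
  intro n hn
  rw [Finsupp.mem_support_iff, expS_apply] at hn
  by_contra h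
  simp [h] at hn

lemma sdeg_expS (I : Finset ℤ) : sdeg (expS I) = 0 := by
  rw [sdeg_eq_sum (support_expS I)]
  refine Finset.sum_eq_zero fun n hn => by simp [expS_apply, hn]

lemma sdeg_expS_add_expS (I J : Finset ℤ) :
    sdeg (expS I + expS J) = (I ∩ J).card := by
  classical
  have h1 : (expS I + expS J).support ⊆ I ∪ J :=
    (Finsupp.support_add).trans (Finset.union_subset_union (support_expS I) (support_expS J))
  rw [sdeg_eq_sum h1]
  have : ∀ n ∈ I ∪ J, (expS I + expS J) n / 2 = if n ∈ I ∩ J then 1 else 0 := by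
    intro n _
    by_cases hI : n ∈ I <;> by_cases hJ : n ∈ J <;>
      simp [Finsupp.add_apply, expS_apply, hI, hJ, Finset.mem_inter]
  rw [Finset.sum_congr rfl this, Finset.sum_ite_mem,
    Finset.inter_eq_right.mpr (Finset.inter_subset_union (s := I) (t := J)),
    Finset.sum_const, smul_eq_mul, mul_one]



/-- The sign `(-1)^{sdeg e}`. -/
def sgn (e : ℤ →₀ ℕ) : k := (-1 : k) ^ sdeg e

/-- The twisted substitution `monomial e c ↦ (-1)^{sdeg e} monomial (negE e) c`. -/
def P : MvPolynomial ℤ k →ₗ[k] MvPolynomial ℤ k :=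
  (MvPolynomial.basisMonomials ℤ k).constr k fun e => sgn k e • monomial (negE e) 1

lemma P_monomial (e : ℤ →₀ ℕ) (c : k) :
    P k (monomial e c) = monomial (negE e) (sgn k e * c) := by
  have hb : (MvPolynomial.basisMonomials ℤ k) e = monomial e 1 :=
    congrFun (MvPolynomial.coe_basisMonomials ℤ k) e
  have h1 : monomial e c = c • (MvPolynomial.basisMonomials ℤ k) e := by
    rw [hb, MvPolynomial.smul_monomial, smul_eq_mul, mul_one]
  rw [h1, map_smul, P, Module.Basis.constr_basis, smul_smul, MvPolynomial.smul_monomial,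
    smul_eq_mul, mul_one, mul_comm]

lemma P_P (p : MvPolynomial ℤ k) : P k (P k p) = p := by
  induction p using MvPolynomial.induction_on' with
  | monomial e c =>
    rw [P_monomial, P_monomial, negE_negE]
    congr 1
    rw [sgn, sgn, sdeg_negE, ← mul_assoc, ← pow_add]
    rw [(Even.add_self (sdeg e)).neg_one_pow, one_mul]
  | add p q hp hq => rw [map_add, map_add, hp, hq]

lemma P_one : P k 1 = 1 := by
  have : (1 : MvPolynomial ℤ k) = monomial 0 1 := by
    rw [← MvPolynomial.C_1, MvPolynomial.C_apply]
  rw [this, P_monomial, negE_zero, sgn, sdeg_zero, pow_zero, one_mul]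

/-- Multiplying by an even power of `X 0` pops out a sign. -/
lemma P_zsq_pow_mul (i : ℕ) (p : MvPolynomial ℤ k) :
    P k ((X 0 ^ 2) ^ i * p) = (-(X 0 ^ 2)) ^ i * P k p := by
  have hz : ((X 0 ^ 2 : MvPolynomial ℤ k)) ^ i = monomial (Finsupp.single 0 (2 * i)) 1 := by
    rw [← pow_mul, X_pow_eq_monomial, mul_comm]
  have hneg : ((-(X 0 ^ 2) : MvPolynomial ℤ k)) ^ i
      = ((-1 : k) ^ i) • monomial (Finsupp.single 0 (2 * i)) 1 := by
    rw [neg_pow, hz, ← MvPolynomial.C_mul', map_pow, map_neg, MvPolynomial.C_1]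
  induction p using MvPolynomial.induction_on' with
  | monomial e c =>
    rw [hz, hneg, MvPolynomial.monomial_mul, one_mul, P_monomial, P_monomial,
      MvPolynomial.smul_monomial, MvPolynomial.monomial_mul, negE_add,
      negE_single, neg_zero]
    have hs : sdeg (Finsupp.single (0:ℤ) (2*i) + e) = i + sdeg e := by
      rw [add_comm (Finsupp.single (0:ℤ) (2*i)) e, sdeg_add_even, sdeg_single]
      · omega
      · intro m
        rw [Finsupp.single_apply]
        split_ifs <;> omega
    congr 1
    rw [sgn, sgn, hs, pow_add, smul_eq_mul]
    ring
  | add p q hp hq =>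
    rw [mul_add, map_add, hp, hq, map_add, mul_add]

lemma P_mul_Xsq (n : ℤ) (p : MvPolynomial ℤ k) :
    P k (p * X n ^ 2) = -(P k p * X (-n) ^ 2) := by
  induction p using MvPolynomial.induction_on' with
  | monomial e c =>
    rw [X_pow_eq_monomial, X_pow_eq_monomial, P_monomial, MvPolynomial.monomial_mul,
      MvPolynomial.monomial_mul, mul_one, mul_one, P_monomial, negE_add, negE_single]
    have hs : sdeg (e + Finsupp.single n 2) = sdeg e + 1 := by
      rw [sdeg_add_even, sdeg_single]
      intro m
      rw [Finsupp.single_apply]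
      split_ifs <;> omega
    rw [← map_neg]
    congr 1
    rw [sgn, sgn, hs, pow_succ]
    ring
  | add p q hp hq =>
    rw [add_mul, map_add, hp, hq, map_add, add_mul, neg_add]

/-- The generating set of the defining ideal. -/
@[reducible] def Sgen : Set (MvPolynomial ℤ k) := { p : MvPolynomial ℤ k |
    ∃ m n : ℤ, p = MvPolynomial.X n ^ 2 + (n : MvPolynomial ℤ k)
      - MvPolynomial.X m ^ 2 - (m : MvPolynomial ℤ k) }

lemma P_aeval_mul (q : Polynomial k) (p : MvPolynomial ℤ k) :
    P k (Polynomial.aeval (X 0 ^ 2 : MvPolynomial ℤ k) q * p)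
      = Polynomial.aeval (-(X 0 ^ 2) : MvPolynomial ℤ k) q * P k p := by
  induction q using Polynomial.induction_on' with
  | add f g hf hg => rw [map_add, add_mul, map_add, hf, hg, map_add, add_mul]
  | monomial i a =>
    rw [Polynomial.aeval_monomial, Polynomial.aeval_monomial]
    have hC : algebraMap k (MvPolynomial ℤ k) a = MvPolynomial.C a := rfl
    rw [hC, mul_assoc, mul_assoc, ← MvPolynomial.smul_eq_C_mul, ← MvPolynomial.smul_eq_C_mul,
      map_smul, P_zsq_pow_mul]

lemma P_span : ∀ x ∈ Ideal.span (Sgen k), ∀ r, P k (r * x) ∈ Ideal.span (Sgen k) := by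
  intro x hx
  induction hx using Submodule.span_induction with
  | mem s hs =>
    intro r
    obtain ⟨m, n, rfl⟩ := hs
    have key : P k (r * (X n ^ 2 + (n : MvPolynomial ℤ k) - X m ^ 2 - (m : MvPolynomial ℤ k)))
        = -(P k r * (X (-n) ^ 2 + ((-n : ℤ) : MvPolynomial ℤ k)
            - X (-m) ^ 2 - ((-m : ℤ) : MvPolynomial ℤ k))) := by
      have h1 : r * (X n ^ 2 + (n : MvPolynomial ℤ k) - X m ^ 2 - (m : MvPolynomial ℤ k))
          = r * X n ^ 2 + (n : k) • r - r * X m ^ 2 - (m : k) • r := by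
        rw [MvPolynomial.smul_eq_C_mul, MvPolynomial.smul_eq_C_mul,
          map_intCast (MvPolynomial.C : k →+* MvPolynomial ℤ k),
          map_intCast (MvPolynomial.C : k →+* MvPolynomial ℤ k)]
        ring
      rw [h1, map_sub, map_sub, map_add, map_smul, map_smul, P_mul_Xsq, P_mul_Xsq,
        MvPolynomial.smul_eq_C_mul, MvPolynomial.smul_eq_C_mul,
        map_intCast (MvPolynomial.C : k →+* MvPolynomial ℤ k),
        map_intCast (MvPolynomial.C : k →+* MvPolynomial ℤ k)]
      push_cast
      ring
    rw [key]
    exact neg_mem (Ideal.mul_mem_left _ _ (Ideal.subset_span ⟨-m, -n, rfl⟩))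
  | zero => intro r; rw [mul_zero, map_zero]; exact zero_mem _
  | add x y _ _ hx hy => intro r; rw [mul_add, map_add]; exact add_mem (hx r) (hy r)
  | smul c x _ hx => intro r; rw [smul_eq_mul, ← mul_assoc]; exact hx (r * c)

lemma P_mem {x : MvPolynomial ℤ k} (hx : x ∈ Ideal.span (Sgen k)) :
    P k x ∈ Ideal.span (Sgen k) := by
  have := P_span k x hx 1
  rwa [one_mul] at this

/-- `P` as a linear equivalence. -/
def Pe : MvPolynomial ℤ k ≃ₗ[k] MvPolynomial ℤ k :=
  LinearEquiv.ofLinear (P k) (P k)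
    (by ext p; simp [P_P]) (by ext p; simp [P_P])

lemma Pe_map_ideal :
    (Submodule.restrictScalars k (Ideal.span (Sgen k))).map
      (Pe k : MvPolynomial ℤ k →ₗ[k] MvPolynomial ℤ k)
      = Submodule.restrictScalars k (Ideal.span (Sgen k)) := by
  apply le_antisymm
  · rintro y ⟨x, hx, rfl⟩
    exact P_mem k hx
  · intro x hx
    exact ⟨P k x, P_mem k hx, P_P k x⟩

/-- The almost-automorphism `φ` on the quotient. -/
def phi : (MvPolynomial ℤ k ⧸ Ideal.span (Sgen k)) ≃ₗ[k]
    (MvPolynomial ℤ k ⧸ Ideal.span (Sgen k)) :=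
  (Submodule.Quotient.restrictScalarsEquiv k (Ideal.span (Sgen k))).symm ≪≫ₗ
    Submodule.Quotient.equiv _ _ (Pe k) (Pe_map_ideal k) ≪≫ₗ
    Submodule.Quotient.restrictScalarsEquiv k (Ideal.span (Sgen k))

lemma phi_mk (p : MvPolynomial ℤ k) :
    phi k (Ideal.Quotient.mk (Ideal.span (Sgen k)) p)
      = Ideal.Quotient.mk (Ideal.span (Sgen k)) (P k p) := rfl

lemma prod_X_eq (I : Finset ℤ) :
    (∏ i ∈ I, (X i : MvPolynomial ℤ k)) = monomial (expS I) 1 := by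
  classical
  induction I using Finset.induction_on with
  | empty =>
    rw [Finset.prod_empty, expS, Finset.sum_empty, MvPolynomial.monomial_zero',
      MvPolynomial.C_1]
  | @insert a s h ih =>
    have hins : expS (insert a s) = Finsupp.single a 1 + expS s := by
      rw [expS, expS, Finset.sum_insert h]
    rw [Finset.prod_insert h, ih, hins, ← pow_one (X a : MvPolynomial ℤ k),
      X_pow_eq_monomial, MvPolynomial.monomial_mul, one_mul]

lemma negE_expS (I : Finset ℤ) : negE (expS I) = expS (negSet I) := by
  classical
  have h : negE (∑ i ∈ I, Finsupp.single i 1) = ∑ i ∈ I, negE (Finsupp.single i 1) :=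
    map_sum (Finsupp.domCongr (Equiv.neg ℤ) : (ℤ →₀ ℕ) ≃+ (ℤ →₀ ℕ)) _ I
  rw [expS, h, expS, negSet, Finset.sum_image (fun x _ y _ h => by omega)]
  exact Finset.sum_congr rfl fun i _ => negE_single i 1

lemma P_repr (q : Polynomial k) (I : Finset ℤ) :
    P k (Polynomial.aeval (X 0 ^ 2 : MvPolynomial ℤ k) q * monomial (expS I) 1)
      = Polynomial.aeval (-(X 0 ^ 2) : MvPolynomial ℤ k) q
          * monomial (expS (negSet I)) 1 := by
  rw [P_aeval_mul, P_monomial, negE_expS, sgn, sdeg_expS, pow_zero, one_mul]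

lemma P_repr2 (qa qb : Polynomial k) (I J : Finset ℤ) :
    P k (Polynomial.aeval (X 0 ^ 2 : MvPolynomial ℤ k) qa * monomial (expS I) 1
        * (Polynomial.aeval (X 0 ^ 2 : MvPolynomial ℤ k) qb * monomial (expS J) 1))
      = (-1 : MvPolynomial ℤ k) ^ ((I ∩ J).card) *
        (Polynomial.aeval (-(X 0 ^ 2) : MvPolynomial ℤ k) qa * monomial (expS (negSet I)) 1 *
         (Polynomial.aeval (-(X 0 ^ 2) : MvPolynomial ℤ k) qb
            * monomial (expS (negSet J)) 1)) := by
  have h1 : Polynomial.aeval (X 0 ^ 2 : MvPolynomial ℤ k) qa * monomial (expS I) 1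
        * (Polynomial.aeval (X 0 ^ 2 : MvPolynomial ℤ k) qb * monomial (expS J) 1)
      = Polynomial.aeval (X 0 ^ 2 : MvPolynomial ℤ k) qa
          * (Polynomial.aeval (X 0 ^ 2 : MvPolynomial ℤ k) qb
            * (monomial (expS I) 1 * monomial (expS J) 1)) := by ring
  rw [h1, P_aeval_mul, P_aeval_mul, MvPolynomial.monomial_mul, one_mul, P_monomial,
    negE_add, negE_expS, negE_expS, sgn, sdeg_expS_add_expS]
  have h2 : (monomial (expS (negSet I) + expS (negSet J))) ((-1:k) ^ (I ∩ J).card * 1)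
      = (-1 : MvPolynomial ℤ k) ^ (I ∩ J).card
          * (monomial (expS (negSet I)) 1 * monomial (expS (negSet J)) 1) := by
    rw [MvPolynomial.monomial_mul, one_mul,
      show ((-1 : MvPolynomial ℤ k) ^ (I ∩ J).card)
        = MvPolynomial.C ((-1:k) ^ (I ∩ J).card) from by rw [map_pow, map_neg, MvPolynomial.C_1],
      ← MvPolynomial.smul_eq_C_mul, MvPolynomial.smul_monomial, smul_eq_mul]
  rw [h2]
  ring

end WeylAux

variable [CharZero k]

set_option synthInstance.maxHeartbeats 1000000 in
set_option maxHeartbeats 1000000 in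
/-- There is a well-defined almost-automorphism `φ` of the
`ℤ_fin`-graded ring `C`: a `k`-linear bijection with `φ(z) = −z` (where
`z = x_0²`), `φ(a x_J) = φ(a) x_{−J}` for `a ∈ C_∅ = k[z]`, satisfying
`φ(cd) = (−1)^{|I∩J|} φ(c) φ(d)` for homogeneous `c ∈ C_I`, `d ∈ C_J`,
with `φ(x_n²) = −x_{−n}²` for all `n`, and `φ² = id`. -/
theorem exists_almost_automorphism_phi :
    ∃ φ : WeylC k ≃ₗ[k] WeylC k,
      φ (xC k 0 ^ 2) = -(xC k 0 ^ 2) ∧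
      (∀ a ∈ Cphi k, ∀ J : Finset ℤ, φ (a * xS k J) = φ a * xS k (negSet J)) ∧
      (∀ (I J : Finset ℤ) (c d : WeylC k), c ∈ Cgrade k I → d ∈ Cgrade k J →
        φ (c * d) = (-1 : WeylC k) ^ ((I ∩ J).card) * (φ c * φ d)) ∧
      (∀ n : ℤ, φ (xC k n ^ 2) = -(xC k (-n) ^ 2)) ∧
      (∀ c : WeylC k, φ (φ c) = c) := by
  classical
  set Isp : Ideal (MvPolynomial ℤ k) := Ideal.span (WeylAux.Sgen k) with hIsp
  set mkW : MvPolynomial ℤ k →+* WeylC k := Ideal.Quotient.mk Isp with hmkW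
  have key : ∀ p : MvPolynomial ℤ k,
      WeylAux.phi k (mkW p) = mkW (WeylAux.P k p) := fun p => rfl
  have hxC : ∀ n : ℤ, xC k n = mkW (MvPolynomial.X n) := fun n => rfl
  have hsq : ∀ n : ℤ, xC k n ^ 2 = mkW (MvPolynomial.X n ^ 2) := fun n => by
    rw [hxC, ← map_pow]
  have hxS : ∀ I : Finset ℤ,
      xS k I = mkW (MvPolynomial.monomial (WeylAux.expS I) 1) := by
    intro I
    have h0 : xS k I = ∏ i ∈ I, mkW (MvPolynomial.X i) := rfl
    rw [h0, ← map_prod, WeylAux.prod_X_eq]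
  have hrep : ∀ a ∈ Cphi k, ∃ q : Polynomial k,
      a = mkW (Polynomial.aeval (MvPolynomial.X 0 ^ 2 : MvPolynomial ℤ k) q) := by
    intro a ha
    rw [Cphi, Algebra.adjoin_singleton_eq_range_aeval, AlgHom.mem_range] at ha
    obtain ⟨q, hq⟩ := ha
    refine ⟨q, ?_⟩
    have hmk : mkW (MvPolynomial.X 0 ^ 2) = Ideal.Quotient.mkₐ k Isp (MvPolynomial.X 0 ^ 2) := by
      rw [Ideal.Quotient.mkₐ_eq_mk]
    rw [← hq, hsq 0, hmk]
    exact (Polynomial.aeval_algHom_apply (Ideal.Quotient.mkₐ k Isp)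
      (MvPolynomial.X 0 ^ 2 : MvPolynomial ℤ k) q).trans
      (by rw [Ideal.Quotient.mkₐ_eq_mk])
  have hgrade : ∀ (I : Finset ℤ) (c : WeylC k), c ∈ Cgrade k I → ∃ q : Polynomial k,
      c = mkW (Polynomial.aeval (MvPolynomial.X 0 ^ 2 : MvPolynomial ℤ k) q
        * MvPolynomial.monomial (WeylAux.expS I) 1) := by
    intro I c hc
    obtain ⟨a, ha, rfl⟩ := hc
    obtain ⟨q, rfl⟩ := hrep a ha
    refine ⟨q, ?_⟩
    rw [LinearMap.mulRight_apply, hxS, ← map_mul]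
  have h4 : ∀ n : ℤ, WeylAux.phi k (xC k n ^ 2) = -(xC k (-n) ^ 2) := by
    intro n
    have hP : WeylAux.P k (MvPolynomial.X n ^ 2) = -(MvPolynomial.X (-n) ^ 2) := by
      rw [MvPolynomial.X_pow_eq_monomial, WeylAux.P_monomial, WeylAux.negE_single,
        show WeylAux.sgn k (Finsupp.single n 2) = -1 from by
          rw [WeylAux.sgn, WeylAux.sdeg_single]; norm_num,
        neg_mul, one_mul, map_neg, ← MvPolynomial.X_pow_eq_monomial]
    rw [hsq, key, hP, map_neg, ← hsq]
  have h1 : WeylAux.phi k (xC k 0 ^ 2) = -(xC k 0 ^ 2) := by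
    have := h4 0
    rwa [neg_zero] at this
  have h2 : ∀ a ∈ Cphi k, ∀ J : Finset ℤ,
      WeylAux.phi k (a * xS k J) = WeylAux.phi k a * xS k (negSet J) := by
    intro a ha J
    obtain ⟨q, rfl⟩ := hrep a ha
    have hPa : WeylAux.P k (Polynomial.aeval (MvPolynomial.X 0 ^ 2 : MvPolynomial ℤ k) q)
        = Polynomial.aeval (-(MvPolynomial.X 0 ^ 2) : MvPolynomial ℤ k) q := by
      conv_lhs => rw [← mul_one (Polynomial.aeval (MvPolynomial.X 0 ^ 2 : MvPolynomial ℤ k) q)]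
      rw [WeylAux.P_aeval_mul, WeylAux.P_one, mul_one]
    rw [hxS, hxS, ← map_mul, key, WeylAux.P_repr, key, hPa, map_mul]
  have h3 : ∀ (I J : Finset ℤ) (c d : WeylC k), c ∈ Cgrade k I → d ∈ Cgrade k J →
      WeylAux.phi k (c * d)
        = (-1 : WeylC k) ^ ((I ∩ J).card) * (WeylAux.phi k c * WeylAux.phi k d) := by
    intro I J c d hc hd
    obtain ⟨qa, rfl⟩ := hgrade I c hc
    obtain ⟨qb, rfl⟩ := hgrade J d hd
    rw [← map_mul, key, key, key, WeylAux.P_repr2, WeylAux.P_repr, WeylAux.P_repr,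
      map_mul, map_mul, map_mul, map_pow, map_neg, map_one]
  have h5 : ∀ c : WeylC k, WeylAux.phi k (WeylAux.phi k c) = c := by
    intro c
    obtain ⟨p, rfl⟩ := Ideal.Quotient.mk_surjective (I := Isp) c
    have hp : Ideal.Quotient.mk Isp p = mkW p := rfl
    rw [hp, key, key, WeylAux.P_P]
  exact ⟨WeylAux.phi k, h1, h2, h3, h4, h5⟩
end
end
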